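/- Let X be a simplicial set and let c be a k-sphere in X (k ≥ 1) whose faces c_0, …, c_k all have degeneracy at least 2. Let r be the minimal value of dgn(c_i) over 0 ≤ i ≤ k and let m be the smallest ordinal with dgn(c_m) = r. If m reduces c_{m+1} and dgn(c_{m+1}) = r, then c_m = c_{m+1}. -/

import Mathlib

open CategoryTheory Simplicial

namespace AufhebungSSet

/-- An `n`-simplex `x` of a simplicial set `X` is degenerate if it is the image of a
simplex of strictly smaller dimension under the action of an epimorphism of `Δ`. -/
def IsDegen (X : SSet) {n : ℕ} (x : X _⦋n⦌) : Prop :=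
  ∃ m : ℕ, m < n ∧ ∃ ε : (⦋n⦌ : SimplexCategory) ⟶ ⦋m⦌,
    Function.Surjective ε.toOrderHom ∧ ∃ y : X _⦋m⦌, x = X.map ε.op y

/-- The degeneracy `dgn x = n - k`, where `k` is the least dimension from which `x`
is the image of a simplex under the action of an epimorphism; by the Eilenberg–Zilber
lemma this is the dimension of the nondegenerate simplex of which `x` is a degeneracy. -/
noncomputable def dgn (X : SSet) {n : ℕ} (x : X _⦋n⦌) : ℕ :=
  n - sInf {k | ∃ ε : (⦋n⦌ : SimplexCategory) ⟶ ⦋k⦌,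
    Function.Surjective ε.toOrderHom ∧ ∃ y : X _⦋k⦌, x = X.map ε.op y}

/-- `i` reduces `x` when `dgn (x δᵢ) = dgn x - 1`. -/
def Reduces (X : SSet) {n : ℕ} (i : Fin (n + 2)) (x : X _⦋n + 1⦌) : Prop :=
  dgn X (X.map (SimplexCategory.δ i).op x) + 1 = dgn X x

/-- `i` properly reduces `x` when `x = x δᵢ σᵢ`. -/
def ProperlyReduces (X : SSet) {n : ℕ} (i : Fin (n + 1)) (x : X _⦋n + 1⦌) : Prop :=
  x = X.map (SimplexCategory.σ i).op (X.map (SimplexCategory.δ i.castSucc).op x)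

/-- A `(K+2)`-sphere: a family `c₀, …, c_{K+2}` of `(K+1)`-simplices satisfying the
cycle equations `cⱼ δᵢ = cᵢ δ_{j-1}` for `i < j` (here reindexed: `c_{j+1} δᵢ = cᵢ δⱼ`
for `i ≤ j`). -/
def IsSphere (X : SSet) {K : ℕ} (c : Fin (K + 3) → X _⦋K + 1⦌) : Prop :=
  ∀ i j : Fin (K + 2), i ≤ j →
    X.map (SimplexCategory.δ i).op (c j.succ) = X.map (SimplexCategory.δ j).op (c i.castSucc)

/-- `y` fills the sphere `c` when `y δᵢ = cᵢ` for all `i`. -/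
def IsFiller (X : SSet) {K : ℕ} (y : X _⦋K + 2⦌) (c : Fin (K + 3) → X _⦋K + 1⦌) : Prop :=
  ∀ i : Fin (K + 3), X.map (SimplexCategory.δ i).op y = c i




open SimplexCategory

def DSet (X : SSet) {n : ℕ} (x : X _⦋n⦌) : Set ℕ :=
  {k | ∃ ε : (⦋n⦌ : SimplexCategory) ⟶ ⦋k⦌,
    Function.Surjective ε.toOrderHom ∧ ∃ y : X _⦋k⦌, x = X.map ε.op y}

lemma dgn_eq (X : SSet) {n : ℕ} (x : X _⦋n⦌) : dgn X x = n - sInf (DSet X x) := rfl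

lemma self_mem_DSet (X : SSet) {n : ℕ} (x : X _⦋n⦌) : n ∈ DSet X x :=
  ⟨𝟙 _, fun v => ⟨v, rfl⟩, x, by simp⟩

lemma sInf_DSet_le (X : SSet) {n : ℕ} (x : X _⦋n⦌) : sInf (DSet X x) ≤ n :=
  Nat.sInf_le (self_mem_DSet X x)

lemma sInf_DSet_mem (X : SSet) {n : ℕ} (x : X _⦋n⦌) : sInf (DSet X x) ∈ DSet X x :=
  Nat.sInf_mem ⟨n, self_mem_DSet X x⟩

lemma surj_to_zero {n : ℕ} (f : (⦋n⦌ : SimplexCategory) ⟶ ⦋0⦌) :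
    Function.Surjective f.toOrderHom := by
  intro v
  refine ⟨0, ?_⟩
  have h := v.isLt
  simp only [SimplexCategory.len_mk] at h ⊢
  ext
  omega

lemma delta_apply {n : ℕ} (i : Fin (n + 2)) (w : Fin (n + 1)) :
    (SimplexCategory.δ i).toOrderHom w = i.succAbove w := rfl

lemma map_map (X : SSet) {a b c : SimplexCategory} (f : a ⟶ b) (g : b ⟶ c)
    (y : X.obj (Opposite.op c)) :
    X.map f.op (X.map g.op y) = X.map (f ≫ g).op y := by
  rw [op_comp, FunctorToTypes.map_comp_apply]

lemma factor_lemma {n t : ℕ} (ε : (⦋n+1⦌ : SimplexCategory) ⟶ ⦋t+1⦌)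
    (hε : Function.Surjective ε.toOrderHom) (i : Fin (n + 2))
    (hns : ¬ Function.Surjective (SimplexCategory.δ i ≫ ε).toOrderHom) :
    ∃ (ε' : (⦋n⦌ : SimplexCategory) ⟶ ⦋t⦌) (a : Fin (t + 2)),
      Function.Surjective ε'.toOrderHom ∧ SimplexCategory.δ i ≫ ε = ε' ≫ SimplexCategory.δ a := by
  obtain ⟨a, ε', hfac⟩ := SimplexCategory.eq_comp_δ_of_not_surjective _ hns
  refine ⟨ε', a, ?_, hfac⟩
  have hanotin : ∀ w, (SimplexCategory.δ i ≫ ε).toOrderHom w ≠ a := by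
    intro w h
    rw [hfac] at h
    exact (Fin.succAbove_ne a (ε'.toOrderHom w))
      (by simpa [SimplexCategory.comp_toOrderHom, delta_apply] using h)
  have hrange : ∀ v, v ≠ ε.toOrderHom i →
      ∃ w, (SimplexCategory.δ i ≫ ε).toOrderHom w = v := by
    intro v hv
    obtain ⟨u, hu⟩ := hε v
    have hui : u ≠ i := by rintro rfl; exact hv hu.symm
    obtain ⟨w, hw⟩ := Fin.exists_succAbove_eq hui
    refine ⟨w, ?_⟩
    have : ε.toOrderHom (i.succAbove w) = v := (congrArg ε.toOrderHom hw).trans hu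
    simpa [SimplexCategory.comp_toOrderHom, delta_apply] using this
  have ha : a = ε.toOrderHom i := by
    by_contra hne
    obtain ⟨w, hw⟩ := hrange a hne
    exact hanotin w hw
  intro b
  have hb : a.succAbove b ≠ ε.toOrderHom i := ha ▸ Fin.succAbove_ne a b
  obtain ⟨w, hw⟩ := hrange _ hb
  rw [hfac] at hw
  refine ⟨w, Fin.succAbove_right_injective (p := a) ?_⟩
  simpa [SimplexCategory.comp_toOrderHom, delta_apply] using hw

/-- If `x = y ε` with `ε` epi onto `[s]` and `ε ∘ δᵢ` is not surjective, then the face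
`x δᵢ` can be written over `[s-1]`. -/
lemma face_mem_of_not_surj (X : SSet) {n s : ℕ} (i : Fin (n+2)) (x : X _⦋n+1⦌)
    (ε : (⦋n+1⦌ : SimplexCategory) ⟶ ⦋s⦌) (hε : Function.Surjective ε.toOrderHom)
    (y : X _⦋s⦌) (hy : x = X.map ε.op y)
    (hns : ¬ Function.Surjective (SimplexCategory.δ i ≫ ε).toOrderHom) :
    ∃ t, t + 1 = s ∧ t ∈ DSet X (X.map (SimplexCategory.δ i).op x) := by
  cases s with
  | zero => exact absurd (surj_to_zero _) hns
  | succ t =>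
    obtain ⟨ε', a, hsurj, hfac⟩ := factor_lemma ε hε i hns
    refine ⟨t, rfl, ε', hsurj, X.map (SimplexCategory.δ a).op y, ?_⟩
    rw [hy, map_map, hfac]
    exact (map_map X _ _ y).symm

lemma mem_DSet_face (X : SSet) {n s : ℕ} (i : Fin (n+2)) (x : X _⦋n+1⦌)
    (hs : s ∈ DSet X x) :
    ∃ s' ≤ s, s' ∈ DSet X (X.map (SimplexCategory.δ i).op x) := by
  obtain ⟨ε, hε, y, hy⟩ := hs
  by_cases hsur : Function.Surjective (SimplexCategory.δ i ≫ ε).toOrderHom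
  · exact ⟨s, le_rfl, SimplexCategory.δ i ≫ ε, hsur, y, by rw [hy, map_map]⟩
  · obtain ⟨t, ht, hmem⟩ := face_mem_of_not_surj X i x ε hε y hy hsur
    exact ⟨t, by omega, hmem⟩

lemma dgn_le_face (X : SSet) {n : ℕ} (i : Fin (n+2)) (x : X _⦋n+1⦌) :
    dgn X x ≤ dgn X (X.map (SimplexCategory.δ i).op x) + 1 := by
  obtain ⟨s', hs', hmem⟩ := mem_DSet_face X i x (sInf_DSet_mem X x)
  have h1 := Nat.sInf_le hmem
  have h2 := sInf_DSet_le X (X.map (SimplexCategory.δ i).op x)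
  have h3 := sInf_DSet_le X x
  rw [dgn_eq, dgn_eq]
  omega

lemma factor_sigma {n k : ℕ} (ε : (⦋n+1⦌ : SimplexCategory) ⟶ ⦋k⦌) (p : Fin (n+1))
    (hcol : ε.toOrderHom p.castSucc = ε.toOrderHom p.succ) :
    ε = σ p ≫ δ p.castSucc ≫ ε ∧ ε = σ p ≫ δ p.succ ≫ ε := by
  obtain ⟨θ', hθ⟩ := eq_σ_comp_of_not_injective' ε p hcol
  constructor
  · conv_lhs => rw [hθ]
    rw [hθ, δ_comp_σ_self_assoc]
  · conv_lhs => rw [hθ]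
    rw [hθ, δ_comp_σ_succ_assoc]

lemma reduces_cases (X : SSet) {n : ℕ} (i : Fin (n+2)) (x : X _⦋n+1⦌)
    (h : Reduces X i x) :
    (∃ hi : (i:ℕ) < n+1,
      x = X.map (SimplexCategory.σ ⟨(i:ℕ), hi⟩).op (X.map (SimplexCategory.δ i).op x)) ∨
    (∃ hi : 0 < (i:ℕ),
      x = X.map (SimplexCategory.σ ⟨(i:ℕ)-1, by have := i.isLt; omega⟩).op
        (X.map (SimplexCategory.δ i).op x)) := by
  have hilt : (i:ℕ) < n + 2 := i.isLt
  obtain ⟨ε, hε, y, hy⟩ := sInf_DSet_mem X x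
  by_cases hA : ∃ h1 : (i:ℕ) < n+1,
      ε.toOrderHom i = ε.toOrderHom (⟨(i:ℕ)+1, by omega⟩ : Fin (n+2))
  · obtain ⟨h1, hcol⟩ := hA
    left
    refine ⟨h1, ?_⟩
    set p : Fin (n+1) := ⟨(i:ℕ), h1⟩ with hp
    have hpc : p.castSucc = i := by ext; simp [hp]
    have hps : p.succ = (⟨(i:ℕ)+1, by omega⟩ : Fin (n+2)) := by ext; simp [hp]
    have hcol' : ε.toOrderHom p.castSucc = ε.toOrderHom p.succ := by
      rw [hpc, hps]; exact hcol
    have hfac := (factor_sigma ε p hcol').1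
    rw [hpc] at hfac
    calc x = X.map ε.op y := hy
    _ = X.map (σ p ≫ SimplexCategory.δ i ≫ ε).op y := by rw [← hfac]
    _ = X.map (σ p).op (X.map (SimplexCategory.δ i ≫ ε).op y) := (map_map X _ _ y).symm
    _ = X.map (σ p).op (X.map (SimplexCategory.δ i).op (X.map ε.op y)) := by
        rw [map_map X (SimplexCategory.δ i) ε y]
    _ = X.map (σ p).op (X.map (SimplexCategory.δ i).op x) := by rw [← hy]
  · by_cases hB : ∃ h1 : 0 < (i:ℕ),
        ε.toOrderHom (⟨(i:ℕ)-1, by omega⟩ : Fin (n+2)) = ε.toOrderHom i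
    · obtain ⟨h1, hcol⟩ := hB
      right
      refine ⟨h1, ?_⟩
      set p : Fin (n+1) := ⟨(i:ℕ)-1, by omega⟩ with hp
      have hps : p.succ = i := by ext; simp [hp]; omega
      have hcol' : ε.toOrderHom p.castSucc = ε.toOrderHom p.succ := by
        rw [hps]; exact hcol
      have hfac := (factor_sigma ε p hcol').2
      rw [hps] at hfac
      calc x = X.map ε.op y := hy
      _ = X.map (σ p ≫ SimplexCategory.δ i ≫ ε).op y := by rw [← hfac]
      _ = X.map (σ p).op (X.map (SimplexCategory.δ i ≫ ε).op y) := (map_map X _ _ y).symm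
      _ = X.map (σ p).op (X.map (SimplexCategory.δ i).op (X.map ε.op y)) := by
          rw [map_map X (SimplexCategory.δ i) ε y]
      _ = X.map (σ p).op (X.map (SimplexCategory.δ i).op x) := by rw [← hy]
    · -- no adjacent collapse : contradiction with Reduces
      exfalso
      push_neg at hA hB
      have hnosur : ¬ Function.Surjective (SimplexCategory.δ i ≫ ε).toOrderHom := by
        intro hsur
        obtain ⟨w, hw⟩ := hsur (ε.toOrderHom i)
        have hw' : ε.toOrderHom (i.succAbove w) = ε.toOrderHom i := by
          simpa [SimplexCategory.comp_toOrderHom, delta_apply] using hw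
        have hne : i.succAbove w ≠ i := Fin.succAbove_ne i w
        rcases lt_or_gt_of_ne hne with hlt | hgt
        · have hltv : (i.succAbove w : ℕ) < (i:ℕ) := Fin.lt_def.mp hlt
          have h0 : 0 < (i:ℕ) := by omega
          apply hB h0
          have hle1 : i.succAbove w ≤ (⟨(i:ℕ)-1, by omega⟩ : Fin (n+2)) :=
            Fin.le_def.mpr (show (i.succAbove w : ℕ) ≤ (i:ℕ)-1 by omega)
          have hle2 : (⟨(i:ℕ)-1, by omega⟩ : Fin (n+2)) ≤ i :=
            Fin.le_def.mpr (show (i:ℕ)-1 ≤ (i:ℕ) by omega)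
          exact le_antisymm (ε.toOrderHom.monotone hle2)
            (hw' ▸ ε.toOrderHom.monotone hle1)
        · have hgtv : (i:ℕ) < (i.succAbove w : ℕ) := Fin.lt_def.mp hgt
          have hwlt : (i.succAbove w : ℕ) < n + 2 := (i.succAbove w).isLt
          have h0 : (i:ℕ) < n+1 := by omega
          apply hA h0
          have hle1 : (⟨(i:ℕ)+1, by omega⟩ : Fin (n+2)) ≤ i.succAbove w :=
            Fin.le_def.mpr (show (i:ℕ)+1 ≤ (i.succAbove w : ℕ) by omega)
          have hle2 : i ≤ (⟨(i:ℕ)+1, by omega⟩ : Fin (n+2)) :=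
            Fin.le_def.mpr (show (i:ℕ) ≤ (i:ℕ)+1 by omega)
          exact le_antisymm (ε.toOrderHom.monotone hle2)
            (hw' ▸ ε.toOrderHom.monotone hle1)
      obtain ⟨t, ht, hmem⟩ := face_mem_of_not_surj X i x ε hε y hy hnosur
      have h1 := Nat.sInf_le hmem
      have h2 := sInf_DSet_le X x
      have hR := h
      rw [Reduces, dgn_eq, dgn_eq] at hR
      omega


/-- If all faces of a sphere `c` have degeneracy at least 2, `r` is the minimal
degeneracy, `m` is the first face of degeneracy `r`, `m` reduces `c_{m+1}`, and
`dgn (c_{m+1}) = r`, then `c_m = c_{m+1}`. -/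
theorem mplus1_c (X : SSet) (K : ℕ) (c : Fin (K + 3) → X _⦋K + 1⦌) (hc : IsSphere X c)
    (r : ℕ) (hr : ∀ u : Fin (K + 3), r ≤ dgn X (c u))
    (m : Fin (K + 3)) (hm : dgn X (c m) = r)
    (hmmin : ∀ u : Fin (K + 3), dgn X (c u) = r → m ≤ u)
    (hdeg : ∀ u : Fin (K + 3), 2 ≤ dgn X (c u))
    (hm1 : (m : ℕ) + 1 < K + 3)
    (hred : Reduces X ⟨(m : ℕ), by omega⟩ (c ⟨(m : ℕ) + 1, hm1⟩))
    (hdgn : dgn X (c ⟨(m : ℕ) + 1, hm1⟩) = r) :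
    c m = c ⟨(m : ℕ) + 1, hm1⟩ := by
  have hmK : (m:ℕ) < K + 3 := m.isLt
  have hmlt : (m:ℕ) < K + 2 := by omega
  have hkey : X.map (SimplexCategory.δ (⟨(m:ℕ), hmlt⟩ : Fin (K+2))).op (c ⟨(m:ℕ)+1, hm1⟩)
      = X.map (SimplexCategory.δ (⟨(m:ℕ), hmlt⟩ : Fin (K+2))).op (c m) := by
    have h := hc ⟨(m:ℕ), hmlt⟩ ⟨(m:ℕ), hmlt⟩ le_rfl
    have h1 : (⟨(m:ℕ), hmlt⟩ : Fin (K+2)).succ = (⟨(m:ℕ)+1, hm1⟩ : Fin (K+3)) := rfl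
    have h2 : (⟨(m:ℕ), hmlt⟩ : Fin (K+2)).castSucc = m := by ext; simp
    rwa [h1, h2] at h
  have hredm1 : dgn X (X.map (SimplexCategory.δ (⟨(m:ℕ), hmlt⟩ : Fin (K+2))).op
      (c ⟨(m:ℕ)+1, hm1⟩)) + 1 = r := by
    have h := hred
    rw [Reduces, hdgn] at h
    exact h
  have hfdgn : dgn X (X.map (SimplexCategory.δ (⟨(m:ℕ), hmlt⟩ : Fin (K+2))).op (c m)) + 1
      = r := by
    rw [← hkey]; exact hredm1
  have hredm : Reduces X (⟨(m:ℕ), hmlt⟩ : Fin (K+2)) (c m) := by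
    rw [Reduces, hm]; exact hfdgn
  have contra : ∀ (_ : 0 < (m:ℕ)) (i' : Fin (K+2)),
      dgn X (X.map (SimplexCategory.δ i').op (c ⟨(m:ℕ)-1, by omega⟩)) + 1 = r → False := by
    intro h0 i' hd
    have hle := dgn_le_face X i' (c (⟨(m:ℕ)-1, by omega⟩ : Fin (K+3)))
    have heq : dgn X (c (⟨(m:ℕ)-1, by omega⟩ : Fin (K+3))) = r :=
      le_antisymm (by omega) (hr _)
    have hmle : (m:ℕ) ≤ (m:ℕ)-1 := Fin.le_def.mp (hmmin _ heq)
    omega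
  rcases reduces_cases X ⟨(m:ℕ), hmlt⟩ (c ⟨(m:ℕ)+1, hm1⟩) hred with ⟨h1, hx⟩ | ⟨h1, hx⟩
  · rcases reduces_cases X ⟨(m:ℕ), hmlt⟩ (c m) hredm with ⟨h2, hx2⟩ | ⟨h2, hx2⟩
    · rw [hx, hkey, ← hx2]
    · exfalso
      have h2' : 0 < (m:ℕ) := h2
      have hface : X.map (SimplexCategory.δ (⟨(m:ℕ)-1, by omega⟩ : Fin (K+2))).op (c m)
          = X.map (SimplexCategory.δ (⟨(m:ℕ), hmlt⟩ : Fin (K+2))).op (c m) := by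
        conv_lhs => rw [hx2]
        rw [map_map, SimplexCategory.δ_comp_σ_self' (by rfl), op_id,
          FunctorToTypes.map_id_apply]
      have hd' : dgn X (X.map (SimplexCategory.δ (⟨(m:ℕ)-1, by omega⟩ : Fin (K+2))).op
          (c ⟨(m:ℕ)-1, by omega⟩)) + 1 = r := by
        have h := hc ⟨(m:ℕ)-1, by omega⟩ ⟨(m:ℕ)-1, by omega⟩ le_rfl
        have e1 : ((⟨(m:ℕ)-1, by omega⟩ : Fin (K+2))).succ = m := by ext; simp; omega
        have e2 : ((⟨(m:ℕ)-1, by omega⟩ : Fin (K+2))).castSucc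
            = (⟨(m:ℕ)-1, by omega⟩ : Fin (K+3)) := rfl
        rw [e1, e2] at h
        rw [← h, hface]
        exact hfdgn
      exact contra h2' _ hd'
  · exfalso
    have h1' : 0 < (m:ℕ) := h1
    have hface : X.map (SimplexCategory.δ (⟨(m:ℕ)-1, by omega⟩ : Fin (K+2))).op
        (c ⟨(m:ℕ)+1, hm1⟩)
        = X.map (SimplexCategory.δ (⟨(m:ℕ), hmlt⟩ : Fin (K+2))).op (c ⟨(m:ℕ)+1, hm1⟩) := by
      conv_lhs => rw [hx]
      rw [map_map, SimplexCategory.δ_comp_σ_self' (by rfl), op_id,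
        FunctorToTypes.map_id_apply]
    have hd' : dgn X (X.map (SimplexCategory.δ (⟨(m:ℕ), hmlt⟩ : Fin (K+2))).op
        (c ⟨(m:ℕ)-1, by omega⟩)) + 1 = r := by
      have h := hc ⟨(m:ℕ)-1, by omega⟩ ⟨(m:ℕ), hmlt⟩
        (Fin.le_def.mpr (show (m:ℕ)-1 ≤ (m:ℕ) by omega))
      have e1 : ((⟨(m:ℕ), hmlt⟩ : Fin (K+2))).succ = (⟨(m:ℕ)+1, hm1⟩ : Fin (K+3)) := rfl
      have e2 : ((⟨(m:ℕ)-1, by omega⟩ : Fin (K+2))).castSucc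
          = (⟨(m:ℕ)-1, by omega⟩ : Fin (K+3)) := rfl
      rw [e1, e2] at h
      rw [← h, hface]
      exact hredm1
    exact contra h1' _ hd'

end AufhebungSSet
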